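/- Let A be an n × n matrix all of whose entries are 0 or 1, with every row sum r_i = Σ_{j=1}^n A(i,j) ≥ 1. Then the permanent satisfies per(A) ≤ ∏_{i=1}^n (r_i!)^{1/r_i} (the Minc–Brègman bound). -/

import Mathlib

open Finset

lemma pow_self_eq_exp (m : ℕ) : (m:ℝ)^m = Real.exp (m * Real.log m) := by
  rcases Nat.eq_zero_or_pos m with h | h
  · simp [h]
  · rw [Real.exp_nat_mul, Real.exp_log (by exact_mod_cast h)]

lemma jensen_pow {κ : Type*} (s : Finset κ) (t : κ → ℕ) :
    ((∑ k ∈ s, t k : ℕ) : ℝ) ^ (∑ k ∈ s, t k) ≤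
      (s.card : ℝ) ^ (∑ k ∈ s, t k) * ∏ k ∈ s, (t k : ℝ) ^ (t k) := by
  rcases s.eq_empty_or_nonempty with rfl | hs
  · simp
  set N : ℕ := ∑ k ∈ s, t k with hN
  rcases Nat.eq_zero_or_pos N with h0 | h0
  · have ht : ∀ k ∈ s, t k = 0 := fun k hk =>
      (Finset.sum_eq_zero_iff.mp h0) k hk
    rw [h0]
    have : ∏ k ∈ s, (t k : ℝ) ^ (t k) = 1 := by
      apply Finset.prod_eq_one; intro k hk; simp [ht k hk]
    simp [this]
  have hr : 0 < (s.card : ℝ) := by exact_mod_cast hs.card_pos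
  have hj := Real.convexOn_mul_log.map_sum_le (t := s) (w := fun _ => (s.card : ℝ)⁻¹)
      (p := fun k => (t k : ℝ)) (fun i _ => by positivity)
      (by rw [Finset.sum_const, nsmul_eq_mul, mul_inv_cancel₀ hr.ne'])
      (fun i _ => Set.mem_Ici.mpr (t i).cast_nonneg)
  have hsum : ∑ i ∈ s, (s.card : ℝ)⁻¹ • (t i : ℝ) = (N : ℝ) / s.card := by
    rw [← Finset.smul_sum]; push_cast [hN, div_eq_inv_mul]; simp [smul_eq_mul]
  rw [hsum] at hj
  have key : (N : ℝ) * Real.log N ≤ N * Real.log s.card + ∑ k ∈ s, (t k : ℝ) * Real.log (t k) := by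
    have hNpos : (0:ℝ) < N := by exact_mod_cast h0
    have hlog : Real.log ((N : ℝ) / s.card) = Real.log N - Real.log s.card :=
      Real.log_div hNpos.ne' hr.ne'
    have h2 : (N : ℝ) / s.card * Real.log ((N:ℝ)/s.card) ≤
        (s.card : ℝ)⁻¹ * ∑ k ∈ s, (t k : ℝ) * Real.log (t k) := by
      calc (N : ℝ) / s.card * Real.log ((N:ℝ)/s.card) ≤
          ∑ i ∈ s, (s.card : ℝ)⁻¹ • ((fun x => x * Real.log x) (t i)) := hj
        _ = (s.card : ℝ)⁻¹ * ∑ k ∈ s, (t k : ℝ) * Real.log (t k) := by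
            rw [← Finset.smul_sum]; simp [smul_eq_mul]
    rw [hlog, div_eq_inv_mul, mul_assoc] at h2
    have h3 := mul_le_mul_of_nonneg_left h2 hr.le
    rw [← mul_assoc, mul_inv_cancel₀ hr.ne', one_mul, ← mul_assoc,
      mul_inv_cancel₀ hr.ne', one_mul] at h3
    nlinarith [h3]
  calc ((N:ℕ):ℝ) ^ N = Real.exp (N * Real.log N) := pow_self_eq_exp N
    _ ≤ Real.exp (N * Real.log s.card + ∑ k ∈ s, (t k : ℝ) * Real.log (t k)) :=
        Real.exp_le_exp.mpr key
    _ = (s.card : ℝ) ^ N * ∏ k ∈ s, (t k : ℝ) ^ (t k) := by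
        rw [Real.exp_add, Real.exp_sum]
        congr 1
        · rw [Real.exp_nat_mul, Real.exp_log hr]
        · exact Finset.prod_congr rfl fun k _ => (pow_self_eq_exp (t k)).symm

lemma fact_rpow_pow (m : ℕ) :
    ((m.factorial : ℝ) ^ ((m : ℝ))⁻¹) ^ m = (m.factorial : ℝ) := by
  rcases Nat.eq_zero_or_pos m with rfl | hm
  · simp
  · rw [← Real.rpow_natCast (((m.factorial : ℝ) ^ ((m : ℝ))⁻¹)) m, ← Real.rpow_mul
      (Nat.cast_nonneg _), inv_mul_cancel₀ (by exact_mod_cast hm.ne'), Real.rpow_one]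

section Comb
variable {α β : Type*} [DecidableEq α] [DecidableEq β]

/-- Extend an equiv on complements of points to a full equiv sending `i ↦ k`. -/
def extendEquiv (i : α) (k : β) (f : {x : α // x ≠ i} ≃ {y : β // y ≠ k}) : α ≃ β :=
  (Equiv.optionSubtypeNe i).symm.trans (f.optionCongr.trans (Equiv.optionSubtypeNe k))

lemma extendEquiv_apply_self (i : α) (k : β) (f : {x : α // x ≠ i} ≃ {y : β // y ≠ k}) :
    extendEquiv i k f i = k := by
  simp [extendEquiv, Equiv.optionSubtypeNe_symm_self]

lemma extendEquiv_apply_ne (i : α) (k : β) (f : {x : α // x ≠ i} ≃ {y : β // y ≠ k})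
    {a : α} (h : a ≠ i) : extendEquiv i k f a = (f ⟨a, h⟩).1 := by
  simp [extendEquiv, Equiv.optionSubtypeNe_symm_of_ne h]

/-- Restrict an equiv with `e i = k` to the complements. -/
def restrictEquiv (e : α ≃ β) (i : α) (k : β) (hei : e i = k) :
    {x : α // x ≠ i} ≃ {y : β // y ≠ k} :=
  e.subtypeEquiv fun a => by
    rw [← hei]
    exact not_congr (Equiv.apply_eq_iff_eq e).symm

lemma restrictEquiv_apply (e : α ≃ β) (i : α) (k : β) (hei : e i = k)
    (x : {x : α // x ≠ i}) : (restrictEquiv e i k hei x).1 = e x.1 := rfl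

/-- The fiber of matchings with `e i = k` is equivalent to matchings of the minor. -/
def fiberEquiv (B : α → β → Bool) (i : α) (k : β) (hik : B i k = true) :
    {e : {e : α ≃ β // ∀ x, B x (e x) = true} // e.1 i = k} ≃
      {f : {x : α // x ≠ i} ≃ {y : β // y ≠ k} // ∀ x, B x.1 (f x).1 = true} where
  toFun e := ⟨restrictEquiv e.1.1 i k e.2, fun x => by
    rw [restrictEquiv_apply]; exact e.1.2 x.1⟩
  invFun f := ⟨⟨extendEquiv i k f.1, fun x => by
      rcases eq_or_ne x i with rfl | hx
      · rw [extendEquiv_apply_self]; exact hik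
      · rw [extendEquiv_apply_ne i k f.1 hx]; exact f.2 ⟨x, hx⟩⟩,
    extendEquiv_apply_self i k f.1⟩
  left_inv e := by
    apply Subtype.ext; apply Subtype.ext; apply Equiv.ext
    intro a
    rcases eq_or_ne a i with rfl | ha
    · rw [extendEquiv_apply_self]; exact e.2.symm
    · rw [extendEquiv_apply_ne i k _ ha, restrictEquiv_apply]
  right_inv f := by
    apply Subtype.ext; apply Equiv.ext
    intro x
    apply Subtype.ext
    rw [restrictEquiv_apply, extendEquiv_apply_ne i k f.1 x.2]

end Comb

section Count
variable {α β : Type*} [Fintype α] [Fintype β] [DecidableEq α] [DecidableEq β]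

lemma card_fiber_of_not (B : α → β → Bool) (i : α) (k : β) (h : ¬ B i k = true) :
    Fintype.card {e : {e : α ≃ β // ∀ x, B x (e x) = true} // e.1 i = k} = 0 := by
  rw [Fintype.card_eq_zero_iff]
  exact ⟨fun e => h (e.2 ▸ e.1.2 i)⟩

lemma card_eq_sum_fibers (B : α → β → Bool) (i : α) :
    Fintype.card {e : α ≃ β // ∀ x, B x (e x) = true} =
      ∑ k : β, Fintype.card
        {e : {e : α ≃ β // ∀ x, B x (e x) = true} // e.1 i = k} := by
  rw [← Fintype.card_sigma]
  exact Fintype.card_congr (Equiv.sigmaFiberEquiv fun (e : {e : α ≃ β // ∀ x, B x (e x) = true}) => e.1 i).symm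

lemma prod_fibers (B : α → β → Bool) (i : α) (f : β → ℝ) :
    ∏ e : {e : α ≃ β // ∀ x, B x (e x) = true}, f (e.1 i) =
      ∏ k : β, f k ^ Fintype.card
        {e : {e : α ≃ β // ∀ x, B x (e x) = true} // e.1 i = k} := by
  rw [← Equiv.prod_comp (Equiv.sigmaFiberEquiv
      (fun e : {e : α ≃ β // ∀ x, B x (e x) = true} => e.1 i))
      (fun e => f (e.1 i))]
  rw [← Finset.univ_sigma_univ, Finset.prod_sigma]
  refine Fintype.prod_congr _ _ fun k => ?_
  have h2 : ∀ e : {e : {e : α ≃ β // ∀ x, B x (e x) = true} // e.1 i = k},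
      f (((Equiv.sigmaFiberEquiv (fun e : {e : α ≃ β // ∀ x, B x (e x) = true} =>
        e.1 i)) ⟨k, e⟩).1 i) = f k := by
    intro e
    have : (e.1).1 i = k := e.2
    simp [Equiv.sigmaFiberEquiv, this]
  rw [Finset.prod_congr rfl fun e _ => h2 e, Finset.prod_const, Finset.card_univ]

lemma card_minor_deg (B : α → β → Bool) (j : α) (k : β) :
    Fintype.card {y : {y : β // y ≠ k} // B j y.1 = true} =
      Fintype.card {y : β // B j y = true} - (if B j k = true then 1 else 0) := by
  rw [Fintype.card_congr (Equiv.subtypeSubtypeEquivSubtypeInter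
      (fun y : β => y ≠ k) (fun y => B j y = true))]
  rw [Fintype.card_subtype, Fintype.card_subtype]
  have h1 : Finset.univ.filter (fun y => y ≠ k ∧ B j y = true) =
      (Finset.univ.filter fun y => B j y = true).erase k := by
    ext y; simp [Finset.mem_erase, and_comm]
  rw [h1]
  by_cases h : B j k = true
  · rw [Finset.card_erase_of_mem (by simp [h]), if_pos h]
  · rw [Finset.erase_eq_of_notMem (by simp [h]), if_neg h, Nat.sub_zero]

lemma card_filter_matched (e : α ≃ β) (B : α → β → Bool) (j : α) (hj : B j (e j) = true) :
    (Finset.univ.filter fun i' => i' ≠ j ∧ B j (e i') = true).card =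
      Fintype.card {y : β // B j y = true} - 1 := by
  rw [← Fintype.card_subtype]
  rw [Fintype.card_congr (e.subtypeEquiv (q := fun y => y ≠ e j ∧ B j y = true)
      (fun a => by simp [not_iff_not, e.apply_eq_iff_eq, and_comm]))]
  rw [Fintype.card_subtype, Fintype.card_subtype]
  have h1 : Finset.univ.filter (fun y => y ≠ e j ∧ B j y = true) =
      (Finset.univ.filter fun y => B j y = true).erase (e j) := by
    ext y; simp [Finset.mem_erase, and_comm]
  rw [h1, Finset.card_erase_of_mem (by simp [hj])]

end Count

theorem bregman_count (n : ℕ) :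
    ∀ {α β : Type} [Fintype α] [Fintype β] [DecidableEq α] [DecidableEq β]
      (B : α → β → Bool), Fintype.card α = n →
      (Nat.card {e : α ≃ β // ∀ x, B x (e x) = true} : ℝ) ≤
        ∏ i : α, ((Nat.card {j : β // B i j = true}).factorial : ℝ) ^
          ((Nat.card {j : β // B i j = true} : ℝ))⁻¹ := by
  induction n with
  | zero =>
    intro α β _ _ _ _ B hcard
    simp only [Nat.card_eq_fintype_card]
    have hα : IsEmpty α := Fintype.card_eq_zero_iff.mp hcard
    have h1 : Fintype.card {e : α ≃ β // ∀ x, B x (e x) = true} ≤ 1 :=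
      Fintype.card_le_one_iff_subsingleton.mpr
        ⟨fun e f => Subtype.ext (Equiv.ext fun x => isEmptyElim x)⟩
    calc (Fintype.card {e : α ≃ β // ∀ x, B x (e x) = true} : ℝ) ≤ 1 := by exact_mod_cast h1
      _ = _ := (Finset.prod_of_isEmpty _).symm
  | succ n IH =>
    intro α β _ _ _ _ B hcard
    simp only [Nat.card_eq_fintype_card]
    set d : α → ℕ := fun j => Fintype.card {y : β // B j y = true} with hd
    set N : ℕ := Fintype.card {e : α ≃ β // ∀ x, B x (e x) = true} with hN
    set b : α → ℝ := fun j => ((d j).factorial : ℝ) ^ ((d j : ℝ))⁻¹ with hb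
    show (N : ℝ) ≤ ∏ j : α, b j
    rcases Nat.eq_zero_or_pos N with h0 | h0
    · rw [h0]
      exact_mod_cast Finset.prod_nonneg fun j _ => Real.rpow_nonneg (Nat.cast_nonneg _) _
    obtain ⟨e0⟩ := Fintype.card_pos_iff.mp h0
    have hβ : Fintype.card β = n + 1 := by rw [← Fintype.card_congr e0.1, hcard]
    have hd1 : ∀ j, 1 ≤ d j := fun j => Fintype.card_pos_iff.mpr ⟨⟨e0.1 j, e0.2 j⟩⟩
    have hdc : ∀ j, d j ≤ n + 1 := fun j => hβ ▸ Fintype.card_subtype_le _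
    set g : α → β → ℝ := fun j k =>
      ((d j - if B j k = true then 1 else 0).factorial : ℝ) ^
        (((d j - if B j k = true then 1 else 0 : ℕ) : ℝ))⁻¹ with hg
    have hgnn : ∀ j k, 0 ≤ g j k := fun j k => Real.rpow_nonneg (Nat.cast_nonneg _) _
    have hbnn : ∀ j, 0 ≤ b j := fun j => Real.rpow_nonneg (Nat.cast_nonneg _) _
    -- Step 1: per-row inequality
    have key : ∀ i : α, (N : ℝ) ^ N ≤ (d i : ℝ) ^ N *
        ∏ e : {e : α ≃ β // ∀ x, B x (e x) = true}, ∏ j ∈ univ.erase i, g j (e.1 i) := by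
      intro i
      set F : β → ℕ := fun k =>
        Fintype.card {e : {e : α ≃ β // ∀ x, B x (e x) = true} // e.1 i = k} with hF
      have hNsum : N = ∑ k ∈ univ.filter (fun k => B i k = true), F k := by
        rw [hN, card_eq_sum_fibers B i]
        exact (Finset.sum_subset (filter_subset _ _) fun k _ hk =>
          card_fiber_of_not B i k (by simpa using hk)).symm
      have hcardf : (univ.filter (fun k => B i k = true)).card = d i :=
        (Fintype.card_subtype _).symm
      have hj := jensen_pow (univ.filter (fun k => B i k = true)) F
      rw [← hNsum, hcardf] at hj
      refine hj.trans ?_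
      refine mul_le_mul_of_nonneg_left ?_ (by positivity)
      have hexp : ∏ k ∈ univ.filter (fun k => B i k = true), (F k : ℝ) ^ (F k) =
          ∏ e : {e : α ≃ β // ∀ x, B x (e x) = true}, (F (e.1 i) : ℝ) := by
        rw [prod_fibers B i (fun k => (F k : ℝ))]
        exact Finset.prod_subset (filter_subset _ _) fun k _ hk => by
          have hz : F k = 0 := card_fiber_of_not B i k (by simpa using hk)
          rw [hz, pow_zero]
      rw [hexp]
      refine Finset.prod_le_prod (fun e _ => Nat.cast_nonneg _) fun e _ => ?_
      have hBi : B i (e.1 i) = true := e.2 i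
      have hFm : F (e.1 i) = Fintype.card
          {f : {x : α // x ≠ i} ≃ {y : β // y ≠ e.1 i} // ∀ x, B x.1 (f x).1 = true} :=
        Fintype.card_congr (fiberEquiv B i (e.1 i) hBi)
      have hcard' : Fintype.card {x : α // x ≠ i} = n := by
        rw [Fintype.card_subtype_compl, hcard, Fintype.card_subtype_eq]
        omega
      have hIH := IH (fun (x : {x : α // x ≠ i}) (y : {y : β // y ≠ e.1 i}) => B x.1 y.1) hcard'
      simp only [Nat.card_eq_fintype_card] at hIH
      rw [hFm]
      have heq : (∏ j : {x : α // x ≠ i},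
          ((Fintype.card {y : {y : β // y ≠ e.1 i} // B j.1 y.1 = true}).factorial : ℝ) ^
            ((Fintype.card {y : {y : β // y ≠ e.1 i} // B j.1 y.1 = true} : ℝ))⁻¹) =
          ∏ j ∈ univ.erase i, g j (e.1 i) := by
        rw [Finset.prod_congr rfl (fun (j : {x : α // x ≠ i}) _ => by
          rw [card_minor_deg B j.1 (e.1 i)])]
        exact Finset.prod_subtype (univ.erase i) (fun x => by simp) (fun j => g j (e.1 i)) |>.symm
      exact heq ▸ hIH
    -- Step 2: inner product evaluation
    have inner : ∀ (e : {e : α ≃ β // ∀ x, B x (e x) = true}) (j : α),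
        ∏ i' ∈ univ.erase j, g j (e.1 i') =
          ((d j - 1).factorial : ℝ) * (b j) ^ (n + 1 - d j) := by
      intro e j
      have hBj : B j (e.1 j) = true := e.2 j
      rw [← Finset.prod_filter_mul_prod_filter_not (univ.erase j)
        (fun i' => B j (e.1 i') = true)]
      have hfilter1 : (univ.erase j).filter (fun i' => B j (e.1 i') = true) =
          univ.filter (fun i' => i' ≠ j ∧ B j (e.1 i') = true) := by
        ext x; simp [Finset.mem_erase, and_comm]
      have hc1 : ((univ.erase j).filter (fun i' => B j (e.1 i') = true)).card = d j - 1 := by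
        rw [hfilter1, card_filter_matched e.1 B j hBj]
      have hc2 : ((univ.erase j).filter (fun i' => ¬ B j (e.1 i') = true)).card
          = n + 1 - d j := by
        have hsplit := Finset.card_filter_add_card_filter_not
          (s := univ.erase j) (p := fun i' => B j (e.1 i') = true)
        rw [Finset.card_erase_of_mem (mem_univ j), card_univ, hcard, hc1] at hsplit
        have := hd1 j; have := hdc j; omega
      have hval1 : ∀ i' ∈ (univ.erase j).filter (fun i' => B j (e.1 i') = true),
          g j (e.1 i') = ((d j - 1).factorial : ℝ) ^ (((d j - 1 : ℕ)) : ℝ)⁻¹ := by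
        intro i' hi'
        simp only [Finset.mem_filter] at hi'
        simp only [hg]
        rw [if_pos hi'.2]
      have hval2 : ∀ i' ∈ (univ.erase j).filter (fun i' => ¬ B j (e.1 i') = true),
          g j (e.1 i') = b j := by
        intro i' hi'
        simp only [Finset.mem_filter] at hi'
        simp only [hg, hb]
        rw [if_neg hi'.2, Nat.sub_zero]
      rw [Finset.prod_congr rfl hval1, Finset.prod_congr rfl hval2,
        Finset.prod_const, Finset.prod_const, hc1, hc2, fact_rpow_pow]
    -- Step 3: combine
    have htot : (N : ℝ) ^ ((n+1) * N) ≤ (∏ j : α, b j) ^ ((n+1) * N) := by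
      have h1 : ∏ _i : α, ((N:ℝ) ^ N) = (N:ℝ) ^ ((n+1) * N) := by
        rw [Finset.prod_const, card_univ, hcard, ← pow_mul, Nat.mul_comm]
      have h2 := Finset.prod_le_prod (s := univ)
        (f := fun _ => ((N:ℝ) ^ N)) (fun i _ => by positivity) (fun i _ => key i)
      rw [h1] at h2
      refine h2.trans (le_of_eq ?_)
      rw [Finset.prod_mul_distrib]
      have h3 : ∏ i : α, ∏ e : {e : α ≃ β // ∀ x, B x (e x) = true},
            ∏ j ∈ univ.erase i, g j (e.1 i)
          = ∏ e : {e : α ≃ β // ∀ x, B x (e x) = true}, ∏ i : α,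
            ∏ j ∈ univ.erase i, g j (e.1 i) := Finset.prod_comm
      have h4 : ∀ e : {e : α ≃ β // ∀ x, B x (e x) = true},
          ∏ i : α, ∏ j ∈ univ.erase i, g j (e.1 i)
            = ∏ j : α, ∏ i ∈ univ.erase j, g j (e.1 i) :=
        fun e => Finset.prod_comm' (fun x y => by simp [Finset.mem_erase, ne_comm])
      rw [h3, Finset.prod_congr rfl (fun e _ => (h4 e).trans
        (Finset.prod_congr rfl (fun j _ => inner e j)))]
      rw [Finset.prod_const, card_univ, ← hN]
      have h5 : ∀ j : α, (d j : ℝ) ^ N *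
          (((d j - 1).factorial : ℝ) * b j ^ (n + 1 - d j)) ^ N = (b j ^ (n+1)) ^ N := by
        intro j
        rw [← mul_pow]
        congr 1
        have hfact : (d j : ℝ) * ((d j - 1).factorial : ℝ) = ((d j).factorial : ℝ) := by
          rw [← Nat.cast_mul, Nat.mul_factorial_pred (Nat.one_le_iff_ne_zero.mp (hd1 j))]
        rw [← mul_assoc, hfact]
        have hbd : ((d j).factorial : ℝ) = b j ^ (d j) := (fact_rpow_pow (d j)).symm
        rw [hbd, ← pow_add, Nat.add_sub_cancel' (hdc j)]
      rw [← Finset.prod_pow, ← Finset.prod_mul_distrib,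
        Finset.prod_congr rfl (fun j _ => h5 j),
        Finset.prod_congr rfl (fun (j:α) _ => (pow_mul (b j) (n+1) N).symm),
        Finset.prod_pow]
    have hpnn : 0 ≤ ∏ j : α, b j := Finset.prod_nonneg fun j _ => hbnn j
    exact le_of_pow_le_pow_left₀ (Nat.mul_ne_zero (Nat.succ_ne_zero n) h0.ne') hpnn htot


/-- The permanent of a square matrix: `per A = ∑ σ, ∏ j, A j (σ j)`. -/
noncomputable def perm {n : ℕ} (A : Matrix (Fin n) (Fin n) ℝ) : ℝ :=
  ∑ σ : Equiv.Perm (Fin n), ∏ j, A j (σ j)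

/-- The Minc–Brègman bound: for an `n × n` matrix with 0/1 entries and row sums
`r i ≥ 1`, the permanent satisfies `per A ≤ ∏ i, (r i)!^(1 / r i)`. -/
theorem minc_bregman
    {n : ℕ} (A : Matrix (Fin n) (Fin n) ℝ)
    (h01 : ∀ i j, A i j = 0 ∨ A i j = 1)
    (r : Fin n → ℕ) (hr : ∀ i, (r i : ℝ) = ∑ j, A i j) (hr1 : ∀ i, 1 ≤ r i) :
    perm A ≤ ∏ i : Fin n, ((r i).factorial : ℝ) ^ (1 / (r i : ℝ)) := by
  set B : Fin n → Fin n → Bool :=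
    fun i j => @decide (A i j = 1) (Classical.propDecidable _) with hB
  have hmain := bregman_count n (α := Fin n) (β := Fin n) B (Fintype.card_fin n)
  have hdeg : ∀ i, Nat.card {j : Fin n // B i j = true} = r i := by
    intro i
    classical
    rw [Nat.card_eq_fintype_card]
    have h1 : (r i : ℝ) = (((Finset.univ.filter fun j => A i j = 1).card : ℕ) : ℝ) := by
      rw [hr i, ← Finset.sum_boole]
      refine Finset.sum_congr rfl fun j _ => ?_
      rcases h01 i j with h | h <;> simp [h]
    have h2 : r i = (Finset.univ.filter fun j => A i j = 1).card := Nat.cast_injective h1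
    rw [Fintype.card_subtype, h2]
    congr 1
    ext j
    simp [hB]
  have hperm : perm A =
      (Nat.card {e : Fin n ≃ Fin n // ∀ x, B x (e x) = true} : ℝ) := by
    classical
    rw [Nat.card_eq_fintype_card]
    have h3 : {e : Fin n ≃ Fin n // ∀ x, B x (e x) = true} ≃
        {σ : Equiv.Perm (Fin n) // ∀ x, A x (σ x) = 1} :=
      Equiv.subtypeEquivRight (fun e => by simp [hB])
    rw [Fintype.card_congr h3, Fintype.card_subtype]
    rw [perm, ← Finset.sum_boole]
    refine Finset.sum_congr rfl fun σ _ => ?_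
    by_cases hσ : ∀ x, A x (σ x) = 1
    · rw [if_pos hσ]
      exact Finset.prod_eq_one fun j _ => hσ j
    · rw [if_neg hσ]
      push_neg at hσ
      obtain ⟨j, hj⟩ := hσ
      refine Finset.prod_eq_zero (Finset.mem_univ j) ?_
      rcases h01 j (σ j) with h | h
      · exact h
      · exact absurd h hj
  rw [hperm]
  refine hmain.trans (le_of_eq ?_)
  refine Finset.prod_congr rfl fun i _ => ?_
  rw [hdeg i, one_div]
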